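/- Let C < min over i of |a_{ii}| where a_{ii} < 0 for all i, let θ ∈ (1/2, 1], and choose Δ > 0 small enough that a := (2θ−1)Δ − Cθ²Δ² > 0 and ab² + C ≤ −a_{ii} for all i, where b := CθΔ/a. Suppose 2 x_i f_i(x,y) + ∑_{l=1}^m g_{il}(x,y)² ≤ ∑_{j=1}^d a_{ij} x_j² + ∑_{j=1}^d b_{ij} y_j² for all x, y ∈ ℝ^d and all i, with a_{ij} ≥ 0 for i ≠ j and b_{ij} ≥ 0. Then for all x, y ∈ ℝ^d and all i, 2 x_i f_i(x,y) + ∑_{l=1}^m g_{il}(x,y)² + (1−2θ) f_i(x,y)² Δ ≤ −C (x_i − θΔ f_i(x,y))² + ∑_{j≠i} a_{ij} x_j² + ∑_{j=1}^d b_{ij} y_j². -/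

import Mathlib

theorem stmt_8 (d m : ℕ)
    (f : (Fin d → ℝ) → (Fin d → ℝ) → Fin d → ℝ)
    (g : (Fin d → ℝ) → (Fin d → ℝ) → Fin d → Fin m → ℝ)
    (a b : Fin d → Fin d → ℝ)
    (ha : ∀ i j, i ≠ j → 0 ≤ a i j) (hb : ∀ i j, 0 ≤ b i j)
    (hdiag : ∀ i, a i i < 0)
    (θ Δ C : ℝ) (hθ : 1/2 < θ) (hθ1 : θ ≤ 1) (hΔ : 0 < Δ)
    (hCpos : 0 < C) (hC : ∀ i, C < |a i i|)
    (A : ℝ) (hA : A = (2*θ - 1)*Δ - C*θ^2*Δ^2) (hApos : 0 < A)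
    (B : ℝ) (hB : B = C*θ*Δ/A)
    (hABC : ∀ i, A*B^2 + C ≤ -a i i)
    (hcond : ∀ (i : Fin d) (x y : Fin d → ℝ),
      2 * x i * f x y i + ∑ l, (g x y i l) ^ 2 ≤
        ∑ j, a i j * (x j) ^ 2 + ∑ j, b i j * (y j) ^ 2) :
    ∀ (i : Fin d) (x y : Fin d → ℝ),
      2 * x i * f x y i + ∑ l, (g x y i l) ^ 2 + (1 - 2*θ) * (f x y i) ^ 2 * Δ ≤
        -C * (x i - θ*Δ*(f x y i)) ^ 2 +
          ∑ j ∈ Finset.univ.erase i, a i j * (x j) ^ 2 +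
          ∑ j, b i j * (y j) ^ 2 := by
  intro i x y
  have hsplit : ∑ j, a i j * (x j) ^ 2 =
      a i i * (x i) ^ 2 + ∑ j ∈ Finset.univ.erase i, a i j * (x j) ^ 2 := by
    rw [← Finset.add_sum_erase _ _ (Finset.mem_univ i)]
  have hAB : A * B = C * θ * Δ := by
    rw [hB]; field_simp
  have key : a i i * (x i) ^ 2 + (1 - 2*θ) * (f x y i) ^ 2 * Δ ≤
      -C * (x i - θ*Δ*(f x y i)) ^ 2 := by
    have h1 := hABC i
    have h2 : 0 ≤ A * (B * x i + f x y i) ^ 2 := by positivity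
    have h3 : (A*B^2 + C + a i i) * (x i)^2 ≤ 0 :=
      mul_nonpos_of_nonpos_of_nonneg (by linarith) (sq_nonneg (x i))
    have h4 : A * B * (x i * f x y i) = C*θ*Δ*(x i * f x y i) := by rw [hAB]
    nlinarith [h2, h3, h4, hA]
  have h0 := hcond i x y
  rw [hsplit] at h0
  linarith
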